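/- Let A be symmetric with eigenvalues λ_1 ≤ … ≤ λ_n and λ_ℓ < λ_{ℓ+1}, θ > 0, τ = (λ_{ℓ+1}+λ_n)/2 − 1/θ − 1, G = (1+θ(1+τ))I − θA. Let P be the orthogonal projection onto span(φ_1,…,φ_ℓ) and Q = I − P. Then for any x ∈ ℝ^n with Px ≠ 0, ‖Q G x‖ / ‖P G x‖ ≤ ρ · ‖Qx‖/‖Px‖ where ρ = (λ_n−λ_{ℓ+1})/(λ_n+λ_{ℓ+1}−2λ_ℓ). -/

import Mathlib

open Matrix Finset

/-- The Euclidean norm on `Fin m → ℝ`. -/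
noncomputable def euclNorm {m : ℕ} (x : Fin m → ℝ) : ℝ := Real.sqrt (∑ i, x i ^ 2)

lemma aux_dot_sum_sq {n : ℕ} (φ : Fin n → (Fin n → ℝ))
    (hortho : ∀ i j, φ i ⬝ᵥ φ j = if i = j then (1 : ℝ) else 0)
    (S : Finset (Fin n)) (b : Fin n → ℝ) :
    (∑ j ∈ S, b j • φ j) ⬝ᵥ (∑ j ∈ S, b j • φ j) = ∑ j ∈ S, b j ^ 2 := by
  classical
  have expand : (∑ j ∈ S, b j • φ j) ⬝ᵥ (∑ j ∈ S, b j • φ j)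
      = ∑ j ∈ S, ∑ k ∈ S, b j * b k * (φ j ⬝ᵥ φ k) := by
    simp only [dotProduct, Finset.sum_apply, Pi.smul_apply, smul_eq_mul, Finset.sum_mul,
      Finset.mul_sum]
    rw [Finset.sum_comm]
    refine Finset.sum_congr rfl fun j _ => ?_
    rw [Finset.sum_comm]
    refine Finset.sum_congr rfl fun k _ => ?_
    refine Finset.sum_congr rfl fun i _ => by ring
  rw [expand]
  refine Finset.sum_congr rfl fun j hj => ?_
  rw [Finset.sum_eq_single j]
  · simp [hortho, sq]
  · intro k hk hkj; simp [hortho, if_neg (Ne.symm hkj)]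
  · intro h; exact absurd hj h

lemma aux_complete {n : ℕ} (φ : Fin n → (Fin n → ℝ))
    (hortho : ∀ i j, φ i ⬝ᵥ φ j = if i = j then (1 : ℝ) else 0)
    (y : Fin n → ℝ) : ∑ i, (y ⬝ᵥ φ i) • φ i = y := by
  classical
  have hΦ : (Matrix.of φ) * (Matrix.of φ)ᵀ = 1 := by
    ext i j; simpa [Matrix.mul_apply, Matrix.one_apply, dotProduct] using hortho i j
  have hΦ' : (Matrix.of φ)ᵀ * (Matrix.of φ) = 1 := mul_eq_one_comm.mp hΦ
  funext l
  have h1 : ∀ k, ∑ i, φ i k * φ i l = if k = l then (1:ℝ) else 0 := by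
    intro k
    have := congrFun (congrFun hΦ' k) l
    simpa [Matrix.mul_apply, Matrix.one_apply] using this
  calc (∑ i, (y ⬝ᵥ φ i) • φ i) l = ∑ i, ∑ k, y k * (φ i k * φ i l) := by
        simp [dotProduct, Finset.sum_mul, mul_assoc]
    _ = ∑ k, y k * ∑ i, φ i k * φ i l := by
        rw [Finset.sum_comm]; simp [Finset.mul_sum]
    _ = y l := by simp [h1]

lemma aux_euclNorm_dot {n : ℕ} (y : Fin n → ℝ) :
    euclNorm y = Real.sqrt (y ⬝ᵥ y) := by
  simp [euclNorm, dotProduct, sq]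

set_option maxHeartbeats 1000000 in
theorem richardson_step_contracts_projection_ratio
    (n : ℕ) (A : Matrix (Fin (n + 1)) (Fin (n + 1)) ℝ) (hA : A.IsSymm)
    (φ : Fin (n + 1) → (Fin (n + 1) → ℝ)) (lam : Fin (n + 1) → ℝ)
    (hortho : ∀ i j, φ i ⬝ᵥ φ j = if i = j then (1 : ℝ) else 0)
    (heig : ∀ j, A.mulVec (φ j) = lam j • φ j)
    (hmono : Monotone lam)
    (ℓ : Fin (n + 1)) (hℓ : (ℓ : ℕ) + 1 ≤ n)
    (hgap : lam ℓ < lam ⟨(ℓ : ℕ) + 1, by omega⟩)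
    (θ τ : ℝ) (hθ : 0 < θ)
    (hτ : τ = (lam ⟨(ℓ : ℕ) + 1, by omega⟩ + lam (Fin.last n)) / 2 - 1 / θ - 1)
    (G : Matrix (Fin (n + 1)) (Fin (n + 1)) ℝ)
    (hG : G = (1 + θ * (1 + τ)) • (1 : Matrix (Fin (n + 1)) (Fin (n + 1)) ℝ) - θ • A)
    (ρ : ℝ)
    (hρ : ρ = (lam (Fin.last n) - lam ⟨(ℓ : ℕ) + 1, by omega⟩) /
        (lam (Fin.last n) + lam ⟨(ℓ : ℕ) + 1, by omega⟩ - 2 * lam ℓ))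
    (P Q : (Fin (n + 1) → ℝ) → (Fin (n + 1) → ℝ))
    (hP : ∀ y, P y = ∑ i ∈ Finset.univ.filter (fun i => i ≤ ℓ), (y ⬝ᵥ φ i) • φ i)
    (hQ : ∀ y, Q y = y - P y)
    (x : Fin (n + 1) → ℝ) (hPx : P x ≠ 0) :
    euclNorm (Q (G.mulVec x)) / euclNorm (P (G.mulVec x))
      ≤ ρ * (euclNorm (Q x) / euclNorm (P x)) := by
  classical
  set ℓ1 : Fin (n + 1) := ⟨(ℓ : ℕ) + 1, by omega⟩ with hℓ1def
  set m0 : ℝ := (lam ℓ1 + lam (Fin.last n)) / 2 with hm0def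
  set μ : Fin (n + 1) → ℝ := fun j => θ * (m0 - lam j) with hμdef
  set a : Fin (n + 1) → ℝ := fun j => x ⬝ᵥ φ j with hadef
  set S : Finset (Fin (n + 1)) := Finset.univ.filter (fun i => i ≤ ℓ) with hSdef
  set Sc : Finset (Fin (n + 1)) := Finset.univ.filter (fun i => ¬ i ≤ ℓ) with hScdef
  have hθne : θ ≠ 0 := ne_of_gt hθ
  -- G is symmetric
  have hGsym : Gᵀ = G := by
    rw [hG]; simp [Matrix.transpose_sub, Matrix.transpose_smul, hA.eq]
  -- eigen action of G
  have hGφ : ∀ j, G.mulVec (φ j) = μ j • φ j := by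
    intro j
    rw [hG, Matrix.sub_mulVec, Matrix.smul_mulVec, Matrix.smul_mulVec,
      Matrix.one_mulVec, heig, smul_smul, ← sub_smul]
    congr 1
    rw [hμdef]
    dsimp only
    rw [hτ, show θ * (1 + (m0 - 1 / θ - 1)) = θ * m0 - 1 by
      rw [mul_add, mul_sub, mul_sub, mul_one_div_cancel hθne]; ring]
    ring
  -- coefficients of G x
  have hdot : ∀ j, (G.mulVec x) ⬝ᵥ φ j = μ j * a j := by
    intro j
    rw [dotProduct_comm, Matrix.dotProduct_mulVec, ← Matrix.mulVec_transpose, hGsym, hGφ,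
      smul_dotProduct, smul_eq_mul, dotProduct_comm]
  -- decompositions
  have hsplit : ∀ y, (∑ j ∈ S, (y ⬝ᵥ φ j) • φ j) + (∑ j ∈ Sc, (y ⬝ᵥ φ j) • φ j) = y := by
    intro y
    rw [hSdef, hScdef, Finset.sum_filter_add_sum_filter_not]
    exact aux_complete φ hortho y
  have hPxe : P x = ∑ j ∈ S, a j • φ j := hP x
  have hsx : (∑ j ∈ S, a j • φ j) + (∑ j ∈ Sc, a j • φ j) = x := hsplit x
  have hQxe : Q x = ∑ j ∈ Sc, a j • φ j := by
    rw [hQ, hPxe, ← hsx, add_sub_cancel_left]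
  have hPGe : P (G.mulVec x) = ∑ j ∈ S, (μ j * a j) • φ j := by
    rw [hP]; exact Finset.sum_congr rfl fun j _ => by rw [hdot j]
  have hQGe : Q (G.mulVec x) = ∑ j ∈ Sc, (μ j * a j) • φ j := by
    have hsG : (∑ j ∈ S, (μ j * a j) • φ j) + (∑ j ∈ Sc, (μ j * a j) • φ j) = G.mulVec x := by
      have := hsplit (G.mulVec x)
      rw [show (∑ j ∈ S, ((G.mulVec x) ⬝ᵥ φ j) • φ j) = ∑ j ∈ S, (μ j * a j) • φ j from
          Finset.sum_congr rfl fun j _ => by rw [hdot j],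
        show (∑ j ∈ Sc, ((G.mulVec x) ⬝ᵥ φ j) • φ j) = ∑ j ∈ Sc, (μ j * a j) • φ j from
          Finset.sum_congr rfl fun j _ => by rw [hdot j]] at this
      exact this
    rw [hQ, hPGe, ← hsG, add_sub_cancel_left]
  -- norms
  have hnorm : ∀ (T : Finset (Fin (n+1))) (b : Fin (n+1) → ℝ),
      euclNorm (∑ j ∈ T, b j • φ j) = Real.sqrt (∑ j ∈ T, b j ^ 2) := by
    intro T b
    rw [aux_euclNorm_dot, aux_dot_sum_sq φ hortho]
  -- scalar bounds
  set α : ℝ := θ * ((lam (Fin.last n) - lam ℓ1) / 2) with hαdef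
  set β : ℝ := θ * (m0 - lam ℓ) with hβdef
  have hle1 : lam ℓ1 ≤ lam (Fin.last n) := hmono (Fin.le_last ℓ1)
  have hαnn : 0 ≤ α := by rw [hαdef]; nlinarith
  have hβpos : 0 < β := by rw [hβdef, hm0def]; nlinarith
  -- per-term bounds
  have hμlow : ∀ j ∈ S, β ≤ μ j := by
    intro j hj
    have hjl : j ≤ ℓ := by simpa [hSdef] using hj
    have : lam j ≤ lam ℓ := hmono hjl
    rw [hβdef, hμdef]; dsimp only; nlinarith
  have hμhigh : ∀ j ∈ Sc, μ j ^ 2 ≤ α ^ 2 := by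
    intro j hj
    have hjl : ¬ j ≤ ℓ := by simpa [hScdef] using hj
    have h1 : ℓ1 ≤ j := by
      rw [Fin.le_def]; rw [not_le, Fin.lt_def] at hjl; simpa [hℓ1def] using hjl
    have h2 : lam ℓ1 ≤ lam j := hmono h1
    have h3 : lam j ≤ lam (Fin.last n) := hmono (Fin.le_last j)
    have hlo : -α ≤ μ j := by rw [hαdef, hμdef]; dsimp only; rw [hm0def]; nlinarith
    have hhi : μ j ≤ α := by rw [hαdef, hμdef]; dsimp only; rw [hm0def]; nlinarith
    exact sq_le_sq' hlo hhi
  -- norm comparisons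
  have hQle : euclNorm (Q (G.mulVec x)) ≤ α * euclNorm (Q x) := by
    rw [hQGe, hQxe, hnorm, hnorm]
    rw [show α * Real.sqrt (∑ j ∈ Sc, a j ^ 2)
        = Real.sqrt (α ^ 2 * ∑ j ∈ Sc, a j ^ 2) by
      rw [Real.sqrt_mul (sq_nonneg α), Real.sqrt_sq hαnn]]
    apply Real.sqrt_le_sqrt
    rw [Finset.mul_sum]
    refine Finset.sum_le_sum fun j hj => ?_
    rw [mul_pow]
    exact mul_le_mul_of_nonneg_right (hμhigh j hj) (sq_nonneg _)
  have hPge : β * euclNorm (P x) ≤ euclNorm (P (G.mulVec x)) := by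
    rw [hPGe, hPxe, hnorm, hnorm]
    rw [show β * Real.sqrt (∑ j ∈ S, a j ^ 2)
        = Real.sqrt (β ^ 2 * ∑ j ∈ S, a j ^ 2) by
      rw [Real.sqrt_mul (sq_nonneg β), Real.sqrt_sq hβpos.le]]
    apply Real.sqrt_le_sqrt
    rw [Finset.mul_sum]
    refine Finset.sum_le_sum fun j hj => ?_
    have h1 : β ^ 2 ≤ μ j ^ 2 := by nlinarith [hμlow j hj, hβpos]
    nlinarith [mul_le_mul_of_nonneg_right h1 (sq_nonneg (a j))]
  -- positivity of ‖P x‖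
  have hPxpos : 0 < euclNorm (P x) := by
    rw [euclNorm]
    apply Real.sqrt_pos.mpr
    have hne : (∑ i, (P x) i ^ 2) ≠ 0 := by
      intro h0
      apply hPx
      funext i
      have h1 := (Finset.sum_eq_zero_iff_of_nonneg
        (fun i _ => sq_nonneg ((P x) i))).mp h0 i (Finset.mem_univ i)
      have : (P x) i = 0 := by nlinarith [sq_nonneg ((P x) i)]
      simpa using this
    exact lt_of_le_of_ne (Finset.sum_nonneg fun i _ => sq_nonneg _) (Ne.symm hne)
  have hPGpos : 0 < euclNorm (P (G.mulVec x)) := lt_of_lt_of_le (by positivity) hPge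
  -- ρ = α / β
  have hραβ : ρ = α / β := by
    have hβne : β ≠ 0 := ne_of_gt hβpos
    have hdenpos : 0 < lam (Fin.last n) + lam ℓ1 - 2 * lam ℓ := by nlinarith [hgap, hle1]
    rw [hρ, div_eq_div_iff (ne_of_gt hdenpos) hβne, hαdef, hβdef, hm0def]
    ring
  -- conclude
  calc euclNorm (Q (G.mulVec x)) / euclNorm (P (G.mulVec x))
      ≤ (α * euclNorm (Q x)) / (β * euclNorm (P x)) :=
        div_le_div₀ (mul_nonneg hαnn (Real.sqrt_nonneg _)) hQle
          (mul_pos hβpos hPxpos) hPge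
    _ = ρ * (euclNorm (Q x) / euclNorm (P x)) := by
        rw [hραβ, div_mul_div_comm]
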